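/- (Spectral gap upper bound for bounded rates, Lemma spec_gap.) Suppose a₀ ≤ g(k) ≤ a₁ for all k ≥ 1 and g(k) → L as k → ∞. Given the known spectral gap bound for the unit-rate zero-range process, Var_{μ¹_{Λ_l,j}}(f) ≤ b₀ (l+j)² D_{μ¹_{Λ_l,j}}(f), for every α > 0 there is a constant B = B_α such that the inverse spectral gap for rate g satisfies W(l,j) ≤ B^l (1+α)^j (l+j)², i.e., Var_{μ_{Λ_l,j}}(f) ≤ B^l (1+α)^j (l+j)² D(μ_{Λ_l,j}, f) for all f. -/

import Mathlib

open Finset Filter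

/-- `g(k)! = g(1)⋯g(k)`. -/
noncomputable def gfact (g : ℕ → ℝ) (k : ℕ) : ℝ := ∏ i ∈ Finset.Icc 1 k, g i

/-- Canonical zero-range weight of a configuration. -/
noncomputable def cw (g : ℕ → ℝ) {n : ℕ} (η : Fin n → ℕ) : ℝ :=
  ∏ x, (gfact g (η x))⁻¹

/-- Expectation under the canonical zero-range measure. -/
noncomputable def canE (g : ℕ → ℝ) (n k : ℕ) (f : (Fin n → ℕ) → ℝ) : ℝ :=
  (∑ η ∈ Finset.Nat.antidiagonalTuple n k, cw g η * f η) /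
  (∑ η ∈ Finset.Nat.antidiagonalTuple n k, cw g η)

/-- Expectation under the Palm canonical measure (size-biased at `o`). -/
noncomputable def palmE (g : ℕ → ℝ) (n k : ℕ) (o : Fin n)
    (f : (Fin n → ℕ) → ℝ) : ℝ :=
  (∑ η ∈ Finset.Nat.antidiagonalTuple n k, (η o : ℝ) * cw g η * f η) /
  (∑ η ∈ Finset.Nat.antidiagonalTuple n k, (η o : ℝ) * cw g η)

/-- The configuration obtained by moving a particle from `x` to `y`. -/
def mv {n : ℕ} (η : Fin n → ℕ) (x y : Fin n) : Fin n → ℕ :=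
  fun z => if z = y then η y + 1 else if z = x then η x - 1 else η z

/-- Left endpoint of the `i`-th nearest-neighbor bond of the cube `Λ_l`. -/
def sA (l : ℕ) (i : Fin (2 * l)) : Fin (2 * l + 1) :=
  ⟨i.1, by have := i.2; omega⟩

/-- Right endpoint of the `i`-th nearest-neighbor bond of the cube `Λ_l`. -/
def sB (l : ℕ) (i : Fin (2 * l)) : Fin (2 * l + 1) :=
  ⟨i.1 + 1, by have := i.2; omega⟩

/-- Variance under the canonical measure `μ_{Λ_l,j}`. -/
noncomputable def varMu (g : ℕ → ℝ) (l j : ℕ)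
    (f : (Fin (2 * l + 1) → ℕ) → ℝ) : ℝ :=
  canE g (2 * l + 1) j (fun η => (f η) ^ 2) - (canE g (2 * l + 1) j f) ^ 2

/-- Local Dirichlet contribution of a configuration for the untagged
(symmetric nearest-neighbor, `p(±1) = 1/2`) zero-range dynamics. -/
noncomputable def dloc (g : ℕ → ℝ) (l : ℕ) (η : Fin (2 * l + 1) → ℕ)
    (f : (Fin (2 * l + 1) → ℕ) → ℝ) : ℝ :=
  (1 / 2) * ∑ i : Fin (2 * l),
    ((1 / 2) * g (η (sA l i)) * (f (mv η (sA l i) (sB l i)) - f η) ^ 2 +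
     (1 / 2) * g (η (sB l i)) * (f (mv η (sB l i) (sA l i)) - f η) ^ 2)

/-- Dirichlet form `D(μ_{Λ_l,j}, f)` of the untagged zero-range process. -/
noncomputable def dirMu (g : ℕ → ℝ) (l j : ℕ)
    (f : (Fin (2 * l + 1) → ℕ) → ℝ) : ℝ :=
  (∑ η ∈ Finset.Nat.antidiagonalTuple (2 * l + 1) j, cw g η * dloc g l η f) /
  (∑ η ∈ Finset.Nat.antidiagonalTuple (2 * l + 1) j, cw g η)

/-- Jump rate of the environment process: at the origin a particle leaves at
rate `g(η(0))(η(0)-1)/η(0)`, elsewhere at rate `g(η(x))`. -/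
noncomputable def rEnv (g : ℕ → ℝ) {n : ℕ} (o : Fin n) (η : Fin n → ℕ)
    (x : Fin n) : ℝ :=
  if x = o then g (η x) * (((η x : ℝ) - 1) / (η x)) else g (η x)

/-- Variance under the Palm canonical measure `ν_{Λ_l,j}`. -/
noncomputable def varNu (g : ℕ → ℝ) (l j : ℕ) (o : Fin (2 * l + 1))
    (f : (Fin (2 * l + 1) → ℕ) → ℝ) : ℝ :=
  palmE g (2 * l + 1) j o (fun η => (f η) ^ 2) - (palmE g (2 * l + 1) j o f) ^ 2

/-- Local Dirichlet contribution for the environment dynamics. -/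
noncomputable def dlocEnv (g : ℕ → ℝ) (l : ℕ) (o : Fin (2 * l + 1))
    (η : Fin (2 * l + 1) → ℕ) (f : (Fin (2 * l + 1) → ℕ) → ℝ) : ℝ :=
  (1 / 2) * ∑ i : Fin (2 * l),
    ((1 / 2) * rEnv g o η (sA l i) * (f (mv η (sA l i) (sB l i)) - f η) ^ 2 +
     (1 / 2) * rEnv g o η (sB l i) * (f (mv η (sB l i) (sA l i)) - f η) ^ 2)

/-- Dirichlet form `D(ν_{Λ_l,j}, f)` of the environment process. -/
noncomputable def dirNu (g : ℕ → ℝ) (l j : ℕ) (o : Fin (2 * l + 1))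
    (f : (Fin (2 * l + 1) → ℕ) → ℝ) : ℝ :=
  (∑ η ∈ Finset.Nat.antidiagonalTuple (2 * l + 1) j,
      (η o : ℝ) * cw g η * dlocEnv g l o η f) /
  (∑ η ∈ Finset.Nat.antidiagonalTuple (2 * l + 1) j, (η o : ℝ) * cw g η)

/-- The unit rate `g¹(k) = 1{k ≥ 1}`. -/
noncomputable def gOne : ℕ → ℝ := fun k => if 1 ≤ k then 1 else 0


lemma sum_pair_expand {ι : Type*} (s : Finset ι) (w f : ι → ℝ) :
    ∑ η ∈ s, ∑ ξ ∈ s, w η * w ξ * (f η - f ξ)^2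
      = 2 * (∑ η ∈ s, w η) * (∑ η ∈ s, w η * f η ^ 2)
        - 2 * (∑ η ∈ s, w η * f η)^2 := by
  have h : ∀ η ∈ s, ∑ ξ ∈ s, w η * w ξ * (f η - f ξ)^2
      = w η * f η ^ 2 * (∑ ξ ∈ s, w ξ)
        - 2 * (w η * f η) * (∑ ξ ∈ s, w ξ * f ξ)
        + w η * (∑ ξ ∈ s, w ξ * f ξ ^ 2) := by
    intro η _
    rw [Finset.mul_sum (s := s), Finset.mul_sum (s := s), Finset.mul_sum (s := s),
      ← Finset.sum_sub_distrib, ← Finset.sum_add_distrib]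
    exact Finset.sum_congr rfl fun ξ _ => by ring
  have h2 : ∑ x ∈ s, 2 * (w x * f x) = 2 * ∑ x ∈ s, w x * f x := by
    rw [Finset.mul_sum]
  rw [Finset.sum_congr rfl h, Finset.sum_add_distrib, Finset.sum_sub_distrib,
    ← Finset.sum_mul, ← Finset.sum_mul, ← Finset.sum_mul, h2]
  ring

lemma var_eq {ι : Type*} (s : Finset ι) (w f : ι → ℝ) (hS : (∑ η ∈ s, w η) ≠ 0) :
    (∑ η ∈ s, w η * f η ^ 2) / (∑ η ∈ s, w η)
      - ((∑ η ∈ s, w η * f η) / (∑ η ∈ s, w η)) ^ 2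
    = (∑ η ∈ s, ∑ ξ ∈ s, w η * w ξ * (f η - f ξ)^2) / (2 * (∑ η ∈ s, w η)^2) := by
  rw [sum_pair_expand]
  field_simp

lemma var_compare {ι : Type*} (s : Finset ι) (hs : s.Nonempty) (w f : ι → ℝ)
    (A₁ A₂ : ℝ) (hA₁ : 0 < A₁)
    (hw : ∀ η ∈ s, A₁ ≤ w η ∧ w η ≤ A₂) :
    (∑ η ∈ s, w η * f η ^ 2) / (∑ η ∈ s, w η)
      - ((∑ η ∈ s, w η * f η) / (∑ η ∈ s, w η)) ^ 2
    ≤ (A₂ / A₁) ^ 2 * ((∑ η ∈ s, (1:ℝ) * f η ^ 2) / (∑ η ∈ s, (1:ℝ))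
      - ((∑ η ∈ s, (1:ℝ) * f η) / (∑ η ∈ s, (1:ℝ))) ^ 2) := by
  obtain ⟨η₀, hη₀⟩ := hs
  have hA₂ : 0 < A₂ := lt_of_lt_of_le hA₁ ((hw η₀ hη₀).1.trans (hw η₀ hη₀).2)
  have hcard : 0 < (s.card : ℝ) := by
    exact_mod_cast Finset.card_pos.2 ⟨η₀, hη₀⟩
  have hS1 : (∑ _η ∈ s, (1:ℝ)) = (s.card : ℝ) := by simp
  have hSlow : A₁ * (s.card : ℝ) ≤ ∑ η ∈ s, w η := by
    rw [← hS1, Finset.mul_sum]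
    refine Finset.sum_le_sum fun η hη => ?_
    simpa using (hw η hη).1
  have hSpos : 0 < ∑ η ∈ s, w η := lt_of_lt_of_le (by positivity) hSlow
  rw [var_eq s w f hSpos.ne', var_eq s (fun _ => (1:ℝ)) f (by rw [hS1]; exact hcard.ne')]
  have hnum : ∑ η ∈ s, ∑ ξ ∈ s, w η * w ξ * (f η - f ξ)^2
      ≤ A₂ ^ 2 * ∑ η ∈ s, ∑ ξ ∈ s, (1:ℝ) * (1:ℝ) * (f η - f ξ)^2 := by
    rw [Finset.mul_sum]
    refine Finset.sum_le_sum fun η hη => ?_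
    rw [Finset.mul_sum]
    refine Finset.sum_le_sum fun ξ hξ => ?_
    have h1 : w η * w ξ ≤ A₂ ^ 2 := by
      have := (hw η hη).2; have := (hw ξ hξ).2
      have l1 := (hw η hη).1; have l2 := (hw ξ hξ).1
      nlinarith
    nlinarith [sq_nonneg (f η - f ξ)]
  have hnum1 : (0:ℝ) ≤ ∑ η ∈ s, ∑ ξ ∈ s, (1:ℝ) * (1:ℝ) * (f η - f ξ)^2 := by
    refine Finset.sum_nonneg fun η _ => Finset.sum_nonneg fun ξ _ => by positivity
  have hden : 2 * (A₁ * (s.card : ℝ)) ^ 2 ≤ 2 * (∑ η ∈ s, w η) ^ 2 := by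
    have h2 := pow_le_pow_left₀ (le_of_lt (mul_pos hA₁ hcard)) hSlow 2
    linarith
  have key : (∑ η ∈ s, ∑ ξ ∈ s, w η * w ξ * (f η - f ξ)^2) / (2 * (∑ η ∈ s, w η)^2)
      ≤ (A₂ ^ 2 * ∑ η ∈ s, ∑ ξ ∈ s, (1:ℝ) * (1:ℝ) * (f η - f ξ)^2)
        / (2 * (A₁ * (s.card : ℝ)) ^ 2) := by
    refine div_le_div₀ (by positivity) hnum (by positivity) hden
  refine key.trans (le_of_eq ?_)
  rw [hS1, div_pow, div_mul_div_comm]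
  congr 1
  ring

lemma gfact_pos (g : ℕ → ℝ) (hg : ∀ k, 1 ≤ k → 0 < g k) (k : ℕ) : 0 < gfact g k :=
  Finset.prod_pos fun i hi => hg i (Finset.mem_Icc.1 hi).1

lemma gfact_lower (g : ℕ → ℝ) (m D : ℝ) (hm : 0 < m) (hmD : m ≤ D) (r₀ : ℕ)
    (hlow : ∀ k, 1 ≤ k → m ≤ g k) (hhigh : ∀ k, r₀ < k → D ≤ g k) :
    ∀ k, (m / D) ^ r₀ * D ^ k ≤ gfact g k := by
  have hD : 0 < D := lt_of_lt_of_le hm hmD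
  have hq : m / D ≤ 1 := div_le_one_of_le₀ hmD hD.le
  have hqpos : 0 < m / D := div_pos hm hD
  have main : ∀ k, (m / D) ^ (min k r₀) * D ^ k ≤ gfact g k := by
    intro k
    induction k with
    | zero => simpa [gfact] using pow_le_one₀ hqpos.le hq
    | succ k ih =>
      have hgf : gfact g (k + 1) = gfact g k * g (k + 1) := by
        rw [gfact, gfact, Finset.prod_Icc_succ_top (by omega)]
      rw [hgf]
      by_cases h : k < r₀
      · have hmin : min (k + 1) r₀ = min k r₀ + 1 := by omega
        rw [hmin]
        have hstep : m ≤ g (k + 1) := hlow _ (by omega)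
        calc (m / D) ^ (min k r₀ + 1) * D ^ (k + 1)
            = ((m / D) ^ (min k r₀) * D ^ k) * (m / D * D) := by ring
          _ = ((m / D) ^ (min k r₀) * D ^ k) * m := by
              rw [div_mul_cancel₀ _ hD.ne']
          _ ≤ gfact g k * g (k + 1) := by
              refine mul_le_mul ih hstep hm.le ?_
              exact le_trans (by positivity) ih
      · have hmin : min (k + 1) r₀ = min k r₀ := by omega
        rw [hmin]
        have hstep : D ≤ g (k + 1) := hhigh _ (by omega)
        calc (m / D) ^ (min k r₀) * D ^ (k + 1)
            = ((m / D) ^ (min k r₀) * D ^ k) * D := by ring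
          _ ≤ gfact g k * g (k + 1) := by
              refine mul_le_mul ih hstep hD.le ?_
              exact le_trans (by positivity) ih
  intro k
  refine le_trans ?_ (main k)
  have := pow_le_pow_of_le_one hqpos.le hq (min_le_right k r₀)
  exact mul_le_mul_of_nonneg_right this (by positivity)

lemma gfact_upper (g : ℕ → ℝ) (M U : ℝ) (hU : 0 < U) (hUM : U ≤ M) (r₀ : ℕ)
    (hg0 : ∀ k, 0 ≤ g k)
    (hup : ∀ k, 1 ≤ k → g k ≤ M) (hhigh : ∀ k, r₀ < k → g k ≤ U) :
    ∀ k, gfact g k ≤ (M / U) ^ r₀ * U ^ k := by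
  have hq : 1 ≤ M / U := (one_le_div hU).2 hUM
  have main : ∀ k, gfact g k ≤ (M / U) ^ (min k r₀) * U ^ k := by
    intro k
    induction k with
    | zero => simpa [gfact] using one_le_pow₀ hq
    | succ k ih =>
      have hgf : gfact g (k + 1) = gfact g k * g (k + 1) := by
        rw [gfact, gfact, Finset.prod_Icc_succ_top (by omega)]
      rw [hgf]
      by_cases h : k < r₀
      · have hmin : min (k + 1) r₀ = min k r₀ + 1 := by omega
        rw [hmin]
        have hstep : g (k + 1) ≤ M := hup _ (by omega)
        calc gfact g k * g (k + 1)
            ≤ ((M / U) ^ (min k r₀) * U ^ k) * M := by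
              refine mul_le_mul ih hstep (hg0 _) (by positivity)
          _ = (M / U) ^ (min k r₀ + 1) * U ^ (k + 1) := by
              rw [pow_succ, pow_succ, mul_mul_mul_comm, div_mul_cancel₀ _ hU.ne']
      · have hmin : min (k + 1) r₀ = min k r₀ := by omega
        rw [hmin]
        have hstep : g (k + 1) ≤ U := hhigh _ (by omega)
        calc gfact g k * g (k + 1)
            ≤ ((M / U) ^ (min k r₀) * U ^ k) * U := by
              refine mul_le_mul ih hstep (hg0 _) (by positivity)
          _ = (M / U) ^ (min k r₀) * U ^ (k + 1) := by ring
  intro k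
  refine (main k).trans ?_
  have := pow_le_pow_right₀ hq (min_le_right k r₀)
  exact mul_le_mul_of_nonneg_right this (by positivity)

lemma gfact_gOne (k : ℕ) : gfact gOne k = 1 := by
  refine Finset.prod_eq_one fun i hi => ?_
  have : 1 ≤ i := (Finset.mem_Icc.1 hi).1
  simp [gOne, this]

lemma cw_gOne {n : ℕ} (η : Fin n → ℕ) : cw gOne η = 1 := by
  refine Finset.prod_eq_one fun x _ => by rw [gfact_gOne]; norm_num



lemma dloc_nonneg (g : ℕ → ℝ) (hg : ∀ k, 0 ≤ g k) (l : ℕ) (η : Fin (2 * l + 1) → ℕ)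
    (f : (Fin (2 * l + 1) → ℕ) → ℝ) : 0 ≤ dloc g l η f := by
  rw [dloc]
  refine mul_nonneg (by norm_num) (Finset.sum_nonneg fun i _ => ?_)
  have h1 := hg (η (sA l i)); have h2 := hg (η (sB l i))
  positivity

lemma dloc_compare (g₁ g₂ : ℕ → ℝ) (c : ℝ) (hc : 0 ≤ c) (h : ∀ k, c * g₁ k ≤ g₂ k)
    (hg₁ : ∀ k, 0 ≤ g₁ k) (l : ℕ) (η : Fin (2 * l + 1) → ℕ)
    (f : (Fin (2 * l + 1) → ℕ) → ℝ) : c * dloc g₁ l η f ≤ dloc g₂ l η f := by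
  rw [dloc, dloc]
  simp only [Finset.mul_sum]
  refine Finset.sum_le_sum fun i _ => ?_
  have h1 := mul_nonneg (sub_nonneg.2 (h (η (sA l i))))
    (sq_nonneg (f (mv η (sA l i) (sB l i)) - f η))
  have h2 := mul_nonneg (sub_nonneg.2 (h (η (sB l i))))
    (sq_nonneg (f (mv η (sB l i) (sA l i)) - f η))
  nlinarith [h1, h2]


set_option maxHeartbeats 1000000 in
/-- Lemma spec_gap: for a bounded rate `a₀ ≤ g ≤ a₁` with
`g(k) → L`, given the unit-rate spectral gap bound
`Var_{μ¹_{Λ_l,j}}(f) ≤ b₀ (l+j)² D_{μ¹_{Λ_l,j}}(f)`, for every `α > 0` there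
is `B = B_α` with `W(l,j) ≤ B^l (1+α)^j (l+j)²`, i.e. the Poincaré inequality
`Var_{μ_{Λ_l,j}}(f) ≤ B^l (1+α)^j (l+j)² D(μ_{Λ_l,j}, f)` holds for all `f`. -/
theorem stmt16 (g : ℕ → ℝ) (a₀ a₁ L b₀ : ℝ)
    (ha₀ : 0 < a₀) (ha : a₀ ≤ a₁) (hg0 : g 0 = 0)
    (hbd : ∀ k : ℕ, 1 ≤ k → a₀ ≤ g k ∧ g k ≤ a₁)
    (hlim : Tendsto g atTop (nhds L)) (hb₀ : 0 ≤ b₀)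
    (hunit : ∀ (l j : ℕ) (f : (Fin (2 * l + 1) → ℕ) → ℝ),
      varMu gOne l j f ≤ b₀ * ((l : ℝ) + j) ^ 2 * dirMu gOne l j f) :
    ∀ α : ℝ, 0 < α → ∃ B : ℝ, 0 < B ∧
      ∀ (l j : ℕ) (f : (Fin (2 * l + 1) → ℕ) → ℝ),
        varMu g l j f ≤ B ^ l * (1 + α) ^ j * ((l : ℝ) + j) ^ 2 * dirMu g l j f := by
  intro α hα
  have hL0 : a₀ ≤ L := ge_of_tendsto hlim (eventually_atTop.2 ⟨1, fun k hk => (hbd k hk).1⟩)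
  have hL1 : L ≤ a₁ := le_of_tendsto hlim (eventually_atTop.2 ⟨1, fun k hk => (hbd k hk).2⟩)
  have hLpos : 0 < L := lt_of_lt_of_le ha₀ hL0
  set β : ℝ := min (1/2) (α/100) with hβdef
  have hβpos : 0 < β := lt_min (by norm_num) (by positivity)
  have hβhalf : β ≤ 1/2 := min_le_left _ _
  have hβα : 100 * β ≤ α := by
    have h : β ≤ α/100 := min_le_right _ _
    linarith
  have h1β : (0:ℝ) < 1 - β := by linarith
  obtain ⟨r₀, hr₀⟩ := (Metric.tendsto_atTop.1 hlim (β * L) (by positivity))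
  set D : ℝ := (1 - β) * L with hDdef
  set U : ℝ := (1 + β) * L with hUdef
  have hD : 0 < D := mul_pos h1β hLpos
  have hU : 0 < U := mul_pos (by linarith) hLpos
  have hDU : D ≤ U := by
    rw [hDdef, hUdef]; nlinarith
  have hgub : ∀ k, r₀ < k → g k ≤ U := by
    intro k hk
    have h := hr₀ k (Nat.le_of_lt hk)
    rw [Real.dist_eq, abs_lt] at h
    rw [hUdef]; nlinarith [h.2]
  have hglb : ∀ k, r₀ < k → D ≤ g k := by
    intro k hk
    have h := hr₀ k (Nat.le_of_lt hk)
    rw [Real.dist_eq, abs_lt] at h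
    rw [hDdef]; nlinarith [h.1]
  set m : ℝ := min a₀ D with hmdef
  set M : ℝ := max a₁ U with hMdef
  have hm : 0 < m := lt_min ha₀ hD
  have hmD : m ≤ D := min_le_right _ _
  have hUM : U ≤ M := le_max_right _ _
  have hM : 0 < M := lt_of_lt_of_le hU hUM
  have hmlow : ∀ k, 1 ≤ k → m ≤ g k := fun k hk => le_trans (min_le_left _ _) (hbd k hk).1
  have hMup : ∀ k, 1 ≤ k → g k ≤ M := fun k hk => le_trans (hbd k hk).2 (le_max_left _ _)
  have hgnn : ∀ k, 0 ≤ g k := by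
    intro k
    rcases Nat.eq_zero_or_pos k with h | h
    · rw [h, hg0]
    · exact le_trans ha₀.le (hbd k h).1
  have hgpos : ∀ k, 1 ≤ k → 0 < g k := fun k hk => lt_of_lt_of_le hm (hmlow k hk)
  have hgfl := gfact_lower g m D hm hmD r₀ hmlow hglb
  have hgfu := gfact_upper g M U hU hUM r₀ hgnn hMup hgub
  have hgfpos : ∀ k, 0 < gfact g k := gfact_pos g hgpos
  set K : ℝ := (D/m)*(M/U) with hKdef
  have hDm1 : 1 ≤ D/m := (one_le_div hm).2 hmD
  have hMU1 : 1 ≤ M/U := (one_le_div hU).2 hUM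
  have hK1 : 1 ≤ K := by rw [hKdef]; nlinarith
  have hKpos : 0 < K := lt_of_lt_of_le one_pos hK1
  set ρ : ℝ := U/D with hρdef
  have hρ1 : 1 ≤ ρ := (one_le_div hD).2 hDU
  have hρ3 : ρ^3 ≤ 1 + α := by
    have hρval : ρ = (1+β)/(1-β) := by
      rw [hρdef, hUdef, hDdef, mul_comm (1+β) L, mul_comm (1-β) L,
        mul_div_mul_left _ _ hLpos.ne']
    rw [hρval, div_pow, div_le_iff₀ (by positivity)]
    have hq : (0:ℝ) ≤ 88 - 124*β + 50*β^2 := by nlinarith [sq_nonneg (10*β - 62/5)]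
    have hkey := mul_nonneg (mul_nonneg hβpos.le (by linarith : (0:ℝ) ≤ 1/2 - β)) hq
    have hαβ := mul_nonneg (by linarith : (0:ℝ) ≤ α - 100*β)
      (by positivity : (0:ℝ) ≤ (1-β)^3)
    have hid : (1+α)*(1-β)^3 - (1+β)^3
        = (α-100*β)*(1-β)^3 + 2*((β*(1/2-β))*(88-124*β+50*β^2)) + 6*β := by ring
    linarith [hkey, hαβ, hβpos]
  set c₀ : ℝ := max 1 (b₀/a₀) with hc₀def
  have hc₀ : 1 ≤ c₀ := le_max_left _ _
  have hba : b₀/a₀ ≤ c₀ := le_max_right _ _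
  have hc₀pos : 0 < c₀ := lt_of_lt_of_le one_pos hc₀
  refine ⟨c₀ * K^(9*r₀), mul_pos hc₀pos (pow_pos hKpos _), ?_⟩
  intro l j f
  set s := Finset.Nat.antidiagonalTuple (2*l+1) j with hsdef
  have hsne : s.Nonempty := by
    refine ⟨fun x => if x = 0 then j else 0, ?_⟩
    rw [hsdef, Finset.Nat.mem_antidiagonalTuple]
    simp
  set A₁ : ℝ := ((M/U)^(r₀*(2*l+1)) * U^j)⁻¹ with hA₁def
  set A₂ : ℝ := ((m/D)^(r₀*(2*l+1)) * D^j)⁻¹ with hA₂def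
  have hA₁pos : 0 < A₁ := by rw [hA₁def]; positivity
  have hA₂pos : 0 < A₂ := by rw [hA₂def]; positivity
  have hcw : ∀ η ∈ s, A₁ ≤ cw g η ∧ cw g η ≤ A₂ := by
    intro η hη
    have hsum : ∑ x, η x = j := (Finset.Nat.mem_antidiagonalTuple).1 hη
    have hprodpos : 0 < ∏ x, gfact g (η x) := Finset.prod_pos fun x _ => hgfpos _
    have hcweq : cw g η = (∏ x, gfact g (η x))⁻¹ := by
      rw [cw, ← Finset.prod_inv_distrib]
    have hup : ∏ x, gfact g (η x) ≤ (M/U)^(r₀*(2*l+1)) * U^j := by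
      calc ∏ x, gfact g (η x) ≤ ∏ x, ((M/U)^r₀ * U^(η x)) :=
            Finset.prod_le_prod (fun x _ => (hgfpos _).le) (fun x _ => hgfu _)
        _ = (M/U)^(r₀*(2*l+1)) * U^j := by
            rw [Finset.prod_mul_distrib, Finset.prod_const, Finset.prod_pow_eq_pow_sum,
              hsum, Finset.card_univ, Fintype.card_fin, ← pow_mul]
    have hlo : (m/D)^(r₀*(2*l+1)) * D^j ≤ ∏ x, gfact g (η x) := by
      calc (m/D)^(r₀*(2*l+1)) * D^j = ∏ x, ((m/D)^r₀ * D^(η x)) := by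
            rw [Finset.prod_mul_distrib, Finset.prod_const, Finset.prod_pow_eq_pow_sum,
              hsum, Finset.card_univ, Fintype.card_fin, ← pow_mul]
        _ ≤ ∏ x, gfact g (η x) :=
            Finset.prod_le_prod (fun x _ => by positivity) (fun x _ => hgfl _)
    constructor
    · rw [hcweq, hA₁def]
      exact inv_anti₀ hprodpos hup
    · rw [hcweq, hA₂def]
      exact inv_anti₀ (by positivity) hlo
  have hvar1 := var_compare s hsne (fun η => cw g η) f A₁ A₂ hA₁pos hcw
  -- identify varMu with the explicit expressions
  have hVg : varMu g l j f
      = (∑ η ∈ s, cw g η * f η ^ 2) / (∑ η ∈ s, cw g η)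
        - ((∑ η ∈ s, cw g η * f η) / (∑ η ∈ s, cw g η)) ^ 2 := rfl
  have hVone : varMu gOne l j f
      = (∑ η ∈ s, (1:ℝ) * f η ^ 2) / (∑ η ∈ s, (1:ℝ))
        - ((∑ η ∈ s, (1:ℝ) * f η) / (∑ η ∈ s, (1:ℝ))) ^ 2 := by
    simp only [varMu, canE, cw_gOne, hsdef]
  -- Dirichlet comparison
  have hgOne_le : ∀ k, a₀ * gOne k ≤ g k := by
    intro k
    rcases Nat.eq_zero_or_pos k with h | h
    · subst h; simp [gOne, hg0]
    · have : gOne k = 1 := by simp [gOne, Nat.pos_iff_ne_zero.1 h]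
      rw [this, mul_one]; exact (hbd k h).1
  have hgOnenn : ∀ k, (0:ℝ) ≤ gOne k := by
    intro k; rw [gOne]; split <;> norm_num
  have hdl1nn : ∀ η : Fin (2*l+1) → ℕ, 0 ≤ dloc gOne l η f :=
    fun η => dloc_nonneg gOne hgOnenn l η f
  have hdlgnn : ∀ η : Fin (2*l+1) → ℕ, 0 ≤ dloc g l η f :=
    fun η => dloc_nonneg g hgnn l η f
  have hdlcmp : ∀ η : Fin (2*l+1) → ℕ, a₀ * dloc gOne l η f ≤ dloc g l η f :=
    fun η => dloc_compare gOne g a₀ ha₀.le hgOne_le hgOnenn l η f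
  have hcard : (0:ℝ) < (s.card : ℝ) := by exact_mod_cast Finset.card_pos.2 hsne
  have hWlo : A₁ * (s.card : ℝ) ≤ ∑ η ∈ s, cw g η := by
    calc A₁ * (s.card : ℝ) = ∑ _η ∈ s, A₁ := by rw [Finset.sum_const, nsmul_eq_mul, mul_comm]
      _ ≤ ∑ η ∈ s, cw g η := Finset.sum_le_sum fun η hη => (hcw η hη).1
  have hWhi : ∑ η ∈ s, cw g η ≤ A₂ * (s.card : ℝ) := by
    calc ∑ η ∈ s, cw g η ≤ ∑ _η ∈ s, A₂ := Finset.sum_le_sum fun η hη => (hcw η hη).2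
      _ = A₂ * (s.card : ℝ) := by rw [Finset.sum_const, nsmul_eq_mul, mul_comm]
  have hWpos : 0 < ∑ η ∈ s, cw g η := lt_of_lt_of_le (by positivity) hWlo
  have hNumlo : a₀ * A₁ * (∑ η ∈ s, dloc gOne l η f)
      ≤ ∑ η ∈ s, cw g η * dloc g l η f := by
    rw [Finset.mul_sum]
    refine Finset.sum_le_sum fun η hη => ?_
    calc a₀ * A₁ * dloc gOne l η f = A₁ * (a₀ * dloc gOne l η f) := by ring
      _ ≤ cw g η * dloc g l η f := by
          refine mul_le_mul (hcw η hη).1 (hdlcmp η) (mul_nonneg ha₀.le (hdl1nn η)) ?_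
          exact le_trans hA₁pos.le (hcw η hη).1
  have hNum1nn : 0 ≤ ∑ η ∈ s, dloc gOne l η f :=
    Finset.sum_nonneg fun η _ => hdl1nn η
  have hNumnn : 0 ≤ ∑ η ∈ s, cw g η * dloc g l η f := by
    refine Finset.sum_nonneg fun η hη => mul_nonneg ?_ (hdlgnn η)
    exact le_trans hA₁pos.le (hcw η hη).1
  have hDg : dirMu g l j f
      = (∑ η ∈ s, cw g η * dloc g l η f) / (∑ η ∈ s, cw g η) := rfl
  have hDone : dirMu gOne l j f = (∑ η ∈ s, dloc gOne l η f) / (s.card : ℝ) := by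
    simp only [dirMu, cw_gOne, one_mul, hsdef]
    rw [Finset.sum_const, nsmul_eq_mul, mul_one]
  have hdircmp : (a₀*A₁*(∑ η ∈ s, dloc gOne l η f))/(A₂*(s.card : ℝ))
      ≤ dirMu g l j f := by
    rw [hDg]
    exact div_le_div₀ hNumnn hNumlo hWpos hWhi
  have hdir1le : dirMu gOne l j f ≤ (A₂/(a₀*A₁)) * dirMu g l j f := by
    have e1 : dirMu gOne l j f
        = (A₂/(a₀*A₁)) * ((a₀*A₁*(∑ η ∈ s, dloc gOne l η f))/(A₂*(s.card : ℝ))) := by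
      have hposd : (0:ℝ) < (a₀*A₁)*(A₂*(s.card : ℝ)) :=
        mul_pos (mul_pos ha₀ hA₁pos) (mul_pos hA₂pos hcard)
      rw [hDone, div_mul_div_comm, div_eq_div_iff hcard.ne' hposd.ne']
      ring
    rw [e1]
    exact mul_le_mul_of_nonneg_left hdircmp (by positivity)
  have hdirnn : 0 ≤ dirMu g l j f := by
    rw [hDg]; exact div_nonneg hNumnn hWpos.le
  -- main chain
  have hchain : varMu g l j f
      ≤ ((b₀/a₀) * (A₂/A₁)^3) * (((l:ℝ)+j)^2 * dirMu g l j f) := by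
    calc varMu g l j f ≤ (A₂/A₁)^2 * varMu gOne l j f := by
          rw [hVg, hVone]; exact hvar1
      _ ≤ (A₂/A₁)^2 * (b₀ * ((l:ℝ)+j)^2 * dirMu gOne l j f) := by
          exact mul_le_mul_of_nonneg_left (hunit l j f) (by positivity)
      _ ≤ (A₂/A₁)^2 * (b₀ * ((l:ℝ)+j)^2 * ((A₂/(a₀*A₁)) * dirMu g l j f)) := by
          refine mul_le_mul_of_nonneg_left ?_ (by positivity)
          exact mul_le_mul_of_nonneg_left hdir1le (by positivity)
      _ = ((b₀/a₀) * (A₂/A₁)^3) * (((l:ℝ)+j)^2 * dirMu g l j f) := by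
          field_simp
  rcases Nat.eq_zero_or_pos l with hl | hl
  · subst hl
    have hd0 : dirMu g 0 j f = 0 := by
      have hz : ∀ η : Fin (2*0+1) → ℕ, dloc g 0 η f = 0 := by
        intro η
        haveI : IsEmpty (Fin (2*0)) := inferInstanceAs (IsEmpty (Fin 0))
        rw [dloc, Finset.univ_eq_empty, Finset.sum_empty, mul_zero]
      simp only [dirMu, hz, mul_zero, Finset.sum_const_zero, zero_div]
    rw [hd0, mul_zero]
    have := hchain
    rw [hd0, mul_zero, mul_zero] at this
    exact this
  · -- coefficient bound
    have hA : A₂/A₁ = K^(r₀*(2*l+1)) * ρ^j := by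
      rw [hA₁def, hA₂def, hKdef, hρdef, div_eq_mul_inv, inv_inv,
        mul_pow (D/m) (M/U) (r₀*(2*l+1))]
      rw [show ((D/m):ℝ)^(r₀*(2*l+1)) = ((m/D)^(r₀*(2*l+1)))⁻¹ by
        rw [← inv_pow, inv_div]]
      rw [div_pow U D j, div_eq_mul_inv (U^j) (D^j)]
      ring
    have h1 : (A₂/A₁)^3 ≤ (K^(9*r₀))^l * (1+α)^j := by
      rw [hA, mul_pow, ← pow_mul, ← pow_mul]
      refine mul_le_mul ?_ ?_ (by positivity) (by positivity)
      · rw [← pow_mul]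
        refine pow_le_pow_right₀ hK1 ?_
        calc r₀*(2*l+1)*3 = r₀*(3*(2*l+1)) := by ring
          _ ≤ r₀*(9*l) := Nat.mul_le_mul_left _ (by omega)
          _ = 9*r₀*l := by ring
      · rw [mul_comm j 3, pow_mul]
        exact pow_le_pow_left₀ (by positivity) hρ3 j
    have h2 : b₀/a₀ ≤ c₀^l := le_trans hba (le_self_pow₀ hc₀ (by omega))
    have hcoef : (b₀/a₀) * (A₂/A₁)^3 ≤ (c₀ * K^(9*r₀))^l * (1+α)^j := by
      calc (b₀/a₀) * (A₂/A₁)^3 ≤ c₀^l * ((K^(9*r₀))^l * (1+α)^j) := by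
            refine mul_le_mul h2 h1 (by positivity) (by positivity)
        _ = (c₀ * K^(9*r₀))^l * (1+α)^j := by rw [mul_pow]; ring
    calc varMu g l j f ≤ ((b₀/a₀) * (A₂/A₁)^3) * (((l:ℝ)+j)^2 * dirMu g l j f) := hchain
      _ ≤ ((c₀ * K^(9*r₀))^l * (1+α)^j) * (((l:ℝ)+j)^2 * dirMu g l j f) := by
          exact mul_le_mul_of_nonneg_right hcoef (by positivity)
      _ = (c₀ * K^(9*r₀))^l * (1+α)^j * ((l:ℝ)+j)^2 * dirMu g l j f := by ring
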